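/- Fix an integer N ≥ 2, reals θ_0, θ_1, …, θ_N > 0 and S_0, S_1, …, S_N ≥ 0, a convex function C : ℝ → ℝ, and functions Q_1, …, Q_N : ℝ → ℝ; for x ∈ ℝ^N let b(x) := S_0/θ_0 + Σ_{n=1}^N (S_n − x_n)/θ_n and Ψ(x) := C(b(0)) − C(b(x)) + Σ_{n=1}^N Q_n(x_n). Then for every x ∈ ℝ^N with all coordinates nonnegative and all distinct indices m ≠ n, Ψ(x) − Ψ(x[n:=0][m:=0]) ≥ ( Ψ(x) − Ψ(x[n:=0]) ) + ( Ψ(x) − Ψ(x[m:=0]) ), where x[i:=t] denotes x with its i-th coordinate replaced by t. (Intra-grouping benefit under concurrent bargaining: the marginal social welfare generated jointly by two APOs is at least the sum of their individual marginal social welfares, so two APOs that merge into a group obtain a weakly larger total payoff—half of the joint marginal welfare—than the sum of their individual concurrent-bargaining payoffs.) -/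

import Mathlib

/-- The MNO's total resource consumption at offloading profile `x`. -/
noncomputable def resourceB {N : ℕ} (θ0 S0 : ℝ) (θ S : Fin N → ℝ)
    (x : Fin N → ℝ) : ℝ :=
  S0 / θ0 + ∑ n, (S n - x n) / θ n

/-- The social welfare of the data-offloading problem. -/
noncomputable def welfare {N : ℕ} (θ0 S0 : ℝ) (θ S : Fin N → ℝ) (C : ℝ → ℝ)
    (Q : Fin N → ℝ → ℝ) (x : Fin N → ℝ) : ℝ :=
  C (resourceB θ0 S0 θ S 0) - C (resourceB θ0 S0 θ S x) + ∑ n, Q n (x n)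

lemma resourceB_update {N : ℕ} (θ0 S0 : ℝ) (θ S : Fin N → ℝ)
    (x : Fin N → ℝ) (n : Fin N) (t : ℝ) :
    resourceB θ0 S0 θ S (Function.update x n t)
      = resourceB θ0 S0 θ S x + (x n - t) / θ n := by
  unfold resourceB
  have h : ∀ i, (S i - Function.update x n t i) / θ i
      = Function.update (fun i => (S i - x i) / θ i) n ((S n - t) / θ n) i := by
    intro i; by_cases h : i = n
    · subst h; simp
    · simp [h]
  rw [Finset.sum_congr rfl fun i _ => h i,
    Finset.sum_update_of_mem (Finset.mem_univ n),
    Finset.sum_eq_sum_sdiff_singleton_add (Finset.mem_univ n)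
      (fun i => (S i - x i) / θ i)]
  field_simp
  ring

lemma Qsum_update {N : ℕ} (Q : Fin N → ℝ → ℝ) (x : Fin N → ℝ) (n : Fin N) (t : ℝ) :
    ∑ i, Q i (Function.update x n t i)
      = ∑ i, Q i (x i) - Q n (x n) + Q n t := by
  have h : ∀ i, Q i (Function.update x n t i)
      = Function.update (fun i => Q i (x i)) n (Q n t) i := by
    intro i; by_cases h : i = n
    · subst h; simp
    · simp [h]
  rw [Finset.sum_congr rfl fun i _ => h i,
    Finset.sum_update_of_mem (Finset.mem_univ n),
    Finset.sum_eq_sum_sdiff_singleton_add (Finset.mem_univ n)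
      (fun i => Q i (x i))]
  ring

lemma convex_key (C : ℝ → ℝ) (hC : ConvexOn ℝ Set.univ C) (a s t : ℝ)
    (hs : 0 ≤ s) (ht : 0 ≤ t) :
    C (a + s) + C (a + t) ≤ C a + C (a + s + t) := by
  rcases eq_or_lt_of_le (add_nonneg hs ht) with h | h
  · have hs0 : s = 0 := by linarith
    have ht0 : t = 0 := by linarith
    rw [hs0, ht0]; norm_num
  · set p := s / (s + t) with hp
    set q := t / (s + t) with hq
    have hp0 : 0 ≤ p := div_nonneg hs (le_of_lt h)
    have hq0 : 0 ≤ q := div_nonneg ht (le_of_lt h)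
    have hpq : p + q = 1 := by rw [hp, hq, ← add_div, div_self (ne_of_gt h)]
    have hps : p * (s + t) = s := div_mul_cancel₀ s (ne_of_gt h)
    have hqt : q * (s + t) = t := div_mul_cancel₀ t (ne_of_gt h)
    have h1 := hC.2 (Set.mem_univ a) (Set.mem_univ (a + s + t)) hq0 hp0 (by linarith)
    have h2 := hC.2 (Set.mem_univ a) (Set.mem_univ (a + s + t)) hp0 hq0 hpq
    simp only [smul_eq_mul] at h1 h2
    have e1 : q * a + p * (a + s + t) = a + s := by linear_combination a * hpq + hps
    have e2 : p * a + q * (a + s + t) = a + t := by linear_combination a * hpq + hqt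
    rw [e1] at h1; rw [e2] at h2
    have e3 : q * C a + p * C a = C a := by linear_combination (C a) * hpq
    have e4 : p * C (a + s + t) + q * C (a + s + t) = C (a + s + t) := by
      linear_combination (C (a + s + t)) * hpq
    linarith

/-- Intra-grouping benefit under concurrent bargaining: the marginal social
welfare generated jointly by two APOs is at least the sum of their individual
marginal social welfares. -/
theorem intra_grouping_benefit_concurrent {N : ℕ} (hN : 2 ≤ N)
    (θ0 : ℝ) (θ : Fin N → ℝ) (hθ0 : 0 < θ0) (hθ : ∀ n, 0 < θ n)
    (S0 : ℝ) (S : Fin N → ℝ) (hS0 : 0 ≤ S0) (hS : ∀ n, 0 ≤ S n)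
    (C : ℝ → ℝ) (hC : ConvexOn ℝ Set.univ C)
    (Q : Fin N → ℝ → ℝ) :
    ∀ x : Fin N → ℝ, (∀ i, 0 ≤ x i) → ∀ m n : Fin N, m ≠ n →
      (welfare θ0 S0 θ S C Q x -
          welfare θ0 S0 θ S C Q (Function.update x n 0)) +
        (welfare θ0 S0 θ S C Q x -
          welfare θ0 S0 θ S C Q (Function.update x m 0)) ≤
      welfare θ0 S0 θ S C Q x -
        welfare θ0 S0 θ S C Q (Function.update (Function.update x n 0) m 0) := by
  intro x hx m n hmn
  have hmn' : (Function.update x n 0) m = x m := Function.update_of_ne hmn 0 x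
  have hb1 : resourceB θ0 S0 θ S (Function.update x n 0)
      = resourceB θ0 S0 θ S x + x n / θ n := by
    rw [resourceB_update]; ring
  have hb2 : resourceB θ0 S0 θ S (Function.update x m 0)
      = resourceB θ0 S0 θ S x + x m / θ m := by
    rw [resourceB_update]; ring
  have hb3 : resourceB θ0 S0 θ S (Function.update (Function.update x n 0) m 0)
      = resourceB θ0 S0 θ S x + x n / θ n + x m / θ m := by
    rw [resourceB_update, hb1, hmn']; ring
  have hq1 := Qsum_update Q x n 0
  have hq2 := Qsum_update Q x m 0
  have hq3 := Qsum_update Q (Function.update x n 0) m 0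
  rw [hmn'] at hq3
  have key := convex_key C hC (resourceB θ0 S0 θ S x) (x n / θ n) (x m / θ m)
      (div_nonneg (hx n) (le_of_lt (hθ n))) (div_nonneg (hx m) (le_of_lt (hθ m)))
  simp only [welfare, hb1, hb2, hb3, hq1, hq2, hq3]
  linarith
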